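/- There is an absolute constant K > 0 with the following property: for every δ ≥ 0, every geodesic δ-hyperbolic metric space X, and any two isometries a, b of X, one has L({a,b}) − K·δ ≤ max{ ℓ(a), ℓ(b), ℓ(ab)/2 } ≤ L({a,b}). -/
import Mathlib


open Pointwise Filter

/-- The joint displacement of a set of isometries at a point:
`L(S,x) = max_{s ∈ S} d(x, s x)`. -/
noncomputable def jointDispAt {X : Type*} [MetricSpace X] (S : Set (X ≃ᵢ X)) (x : X) : ℝ :=
  sSup ((fun s : X ≃ᵢ X => dist x (s x)) '' S)

/-- The joint minimal displacement `L(S) = inf_x L(S,x)`. -/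
noncomputable def jointMinDisp {X : Type*} [MetricSpace X] (S : Set (X ≃ᵢ X)) : ℝ :=
  sInf (Set.range (jointDispAt S))

/-- The asymptotic joint displacement `ℓ(S) = lim_n L(S^n)/n`; the limit exists by
subadditivity, hence agrees with the `limsup` used here. -/
noncomputable def asympDisp {X : Type*} [MetricSpace X] (S : Set (X ≃ᵢ X)) : ℝ :=
  Filter.limsup (fun n : ℕ => jointMinDisp (S ^ n) / n) Filter.atTop

/-- `λ(S) = max_{s ∈ S} ℓ(s)`. -/
noncomputable def lamD {X : Type*} [MetricSpace X] (S : Set (X ≃ᵢ X)) : ℝ :=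
  sSup ((fun s : X ≃ᵢ X => asympDisp {s}) '' S)

/-- `λ_k(S) = max_{1 ≤ j ≤ k} λ(S^j)/j`. -/
noncomputable def lamK {X : Type*} [MetricSpace X] (k : ℕ) (S : Set (X ≃ᵢ X)) : ℝ :=
  sSup ((fun j : ℕ => lamD (S ^ j) / j) '' Set.Icc 1 k)

/-- `λ_∞(S) = sup_{j ≥ 1} λ(S^j)/j`. -/
noncomputable def lamInf {X : Type*} [MetricSpace X] (S : Set (X ≃ᵢ X)) : ℝ :=
  sSup ((fun j : ℕ => lamD (S ^ j) / j) '' Set.Ici 1)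

/-- A geodesic segment from `a` to `b`: an isometric image of the interval `[0, d(a,b)]`. -/
def IsGeodesicSegment {X : Type*} [MetricSpace X] (s : Set X) (a b : X) : Prop :=
  ∃ f : ℝ → X, f 0 = a ∧ f (dist a b) = b ∧
    (∀ u ∈ Set.Icc (0 : ℝ) (dist a b), ∀ v ∈ Set.Icc (0 : ℝ) (dist a b),
      dist (f u) (f v) = |u - v|) ∧
    s = f '' Set.Icc (0 : ℝ) (dist a b)

/-- A geodesic metric space: every two points are joined by a geodesic segment. -/
def GeodesicSpace (X : Type*) [MetricSpace X] : Prop :=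
  ∀ a b : X, ∃ s : Set X, IsGeodesicSegment s a b

/-- `δ`-hyperbolicity: every geodesic triangle is `δ`-thin, i.e. each side is contained in
the closed `δ`-neighborhood of the union of the other two sides. -/
def GromovHyperbolic (X : Type*) [MetricSpace X] (δ : ℝ) : Prop :=
  ∀ a b c : X, ∀ sab sbc sca : Set X,
    IsGeodesicSegment sab a b → IsGeodesicSegment sbc b c → IsGeodesicSegment sca c a →
      (∀ x ∈ sab, ∃ y ∈ sbc ∪ sca, dist x y ≤ δ) ∧
      (∀ x ∈ sbc, ∃ y ∈ sab ∪ sca, dist x y ≤ δ) ∧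
      (∀ x ∈ sca, ∃ y ∈ sab ∪ sbc, dist x y ≤ δ)

/-- The CAT(0) comparison inequality: for all `a b c` and every midpoint `m` of a geodesic
from `b` to `c`, `2 d(a,m)² ≤ d(a,b)² + d(a,c)² - d(b,c)²/2`. -/
def CAT0 (X : Type*) [MetricSpace X] : Prop :=
  ∀ a b c m : X, dist b m = dist b c / 2 → dist m c = dist b c / 2 →
    2 * dist a m ^ 2 ≤ dist a b ^ 2 + dist a c ^ 2 - dist b c ^ 2 / 2

/-- A subset is (geodesically) convex if every geodesic segment between two of its points is
contained in it. -/
def GeodConvex {X : Type*} [MetricSpace X] (C : Set X) : Prop :=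
  ∀ a ∈ C, ∀ b ∈ C, ∀ s : Set X, IsGeodesicSegment s a b → s ⊆ C

/-- Translation length `L(g) = inf_x d(x, g x)`. -/
noncomputable def transLen {X : Type*} [MetricSpace X] (g : X ≃ᵢ X) : ℝ :=
  sInf (Set.range fun x : X => dist x (g x))

/-- Asymptotic translation length `ℓ(g) = lim_n L(g^n)/n`. -/
noncomputable def asympTransLen {X : Type*} [MetricSpace X] (g : X ≃ᵢ X) : ℝ :=
  Filter.limsup (fun n : ℕ => transLen (g ^ n) / n) Filter.atTop

universe u

section GP
variable {X : Type*} [MetricSpace X]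

noncomputable def gp (w u v : X) : ℝ := (dist w u + dist w v - dist u v) / 2

lemma gp_nonneg (w u v : X) : 0 ≤ gp w u v := by
  have h := dist_triangle u w v
  have h2 : dist u w = dist w u := dist_comm u w
  unfold gp; linarith

lemma gp_le_left (w u v : X) : gp w u v ≤ dist w u := by
  have h := dist_triangle w u v
  unfold gp; linarith

lemma gp_symm (w u v : X) : gp w u v = gp w v u := by
  unfold gp; rw [dist_comm u v]; ring

lemma gp_isom (e : X ≃ᵢ X) (w u v : X) : gp (e w) (e u) (e v) = gp w u v := by
  unfold gp; rw [e.dist_eq, e.dist_eq, e.dist_eq]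

lemma gp_self (w u : X) : gp w u u = dist w u := by
  unfold gp; simp

lemma gp_dist (w u v : X) : dist u v = dist w u + dist w v - 2 * gp w u v := by
  unfold gp; ring

lemma gp_add (w u v : X) : gp u w v + gp v w u = dist u v := by
  unfold gp; rw [dist_comm v w, dist_comm v u, dist_comm u w]; ring

def FourPt (X : Type*) [MetricSpace X] (d4 : ℝ) : Prop :=
  ∀ w x y z : X, min (gp w x y) (gp w y z) - d4 ≤ gp w x z

lemma IsGeodesicSegment.symm {s : Set X} {a b : X} (h : IsGeodesicSegment s a b) :
    IsGeodesicSegment s b a := by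
  obtain ⟨f, h0, hd, hiso, hs⟩ := h
  have hD : dist b a = dist a b := dist_comm b a
  refine ⟨fun u => f (dist a b - u), by simp [hd], by simp [hD, h0], ?_, ?_⟩
  · intro u hu v hv
    rw [hD] at hu hv
    have hu' : dist a b - u ∈ Set.Icc (0:ℝ) (dist a b) := by
      constructor <;> [linarith [hu.2]; linarith [hu.1]]
    have hv' : dist a b - v ∈ Set.Icc (0:ℝ) (dist a b) := by
      constructor <;> [linarith [hv.2]; linarith [hv.1]]
    rw [hiso _ hu' _ hv']
    rw [abs_sub_comm]
    congr 1; ring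
  · rw [hs, hD]
    have : (fun u => f (dist a b - u)) = f ∘ (fun u => dist a b - u) := rfl
    rw [this, Set.image_comp]
    congr 1
    rw [Set.image_const_sub_Icc]
    simp

lemma segment_point {s : Set X} {a b : X} (h : IsGeodesicSegment s a b) {t : ℝ}
    (ht : t ∈ Set.Icc (0:ℝ) (dist a b)) :
    ∃ m ∈ s, dist a m = t ∧ dist m b = dist a b - t := by
  obtain ⟨f, h0, hd, hiso, hs⟩ := h
  refine ⟨f t, hs ▸ ⟨t, ht, rfl⟩, ?_, ?_⟩
  · have h1 := hiso 0 ⟨le_refl 0, dist_nonneg⟩ t ht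
    rw [h0] at h1
    rw [h1, abs_sub_comm, sub_zero, abs_of_nonneg ht.1]
  · have h1 := hiso t ht (dist a b) ⟨dist_nonneg, le_refl _⟩
    rw [hd] at h1
    rw [h1, abs_of_nonpos (by linarith [ht.2])]
    ring

lemma segment_dist_add {s : Set X} {a b : X} (h : IsGeodesicSegment s a b) {m : X}
    (hm : m ∈ s) : dist a m + dist m b = dist a b := by
  obtain ⟨f, h0, hd, hiso, hs⟩ := h
  rw [hs] at hm
  obtain ⟨t, ht, rfl⟩ := hm
  have h1 := hiso 0 ⟨le_refl 0, dist_nonneg⟩ t ht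
  have h2 := hiso t ht (dist a b) ⟨dist_nonneg, le_refl _⟩
  rw [h0] at h1; rw [hd] at h2
  rw [h1, h2, abs_sub_comm 0 t, sub_zero, abs_of_nonneg ht.1,
    abs_of_nonpos (by linarith [ht.2])]
  ring

lemma geodesic_point (hG : GeodesicSpace X) (x w : X) {t : ℝ}
    (ht : t ∈ Set.Icc (0:ℝ) (dist x w)) :
    ∃ m : X, dist x m = t ∧ dist m w = dist x w - t := by
  obtain ⟨s, hs⟩ := hG x w
  obtain ⟨m, _, hm⟩ := segment_point hs ht
  exact ⟨m, hm⟩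

lemma gp_le_of_mem_segment {s : Set X} {a b : X} (h : IsGeodesicSegment s a b) {q : X}
    (hq : q ∈ s) (w : X) : gp w a b ≤ dist w q := by
  have h1 := segment_dist_add h hq
  have h2 := dist_triangle w a q  -- wrong direction? need dist w a ≤ dist w q + dist q a
  have h3 := dist_triangle w q a
  have h4 := dist_triangle w q b
  have h5 : dist q a = dist a q := dist_comm q a
  unfold gp; linarith

end GP

section FourPtSec
variable {X : Type*} [MetricSpace X]

lemma fourPt_of_hyperbolic {δ : ℝ} (hδ : 0 ≤ δ) (hG : GeodesicSpace X)
    (hH : GromovHyperbolic X δ) : FourPt X (3 * δ) := by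
  intro w x y z
  obtain ⟨sxz, hsxz⟩ := hG x z
  obtain ⟨swx, hswx⟩ := hG w x
  obtain ⟨szw, hszw⟩ := hG z w
  have T1 := hH w x z swx sxz szw hswx hsxz hszw
  set t := gp x z w with hgpt
  have ht : t ∈ Set.Icc (0:ℝ) (dist x z) := ⟨gp_nonneg _ _ _, gp_le_left _ _ _⟩
  obtain ⟨m, hm, hxm, hmz⟩ := segment_point hsxz ht
  obtain ⟨p, hp, hmp⟩ := T1.2.1 m hm
  have hwm : dist w m ≤ gp w x z + 2 * δ := by
    rcases hp with hp | hp
    · have h1 := segment_dist_add hswx hp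
      -- dist w p + dist p x = dist w x ; dist x m ≤ dist x p + dist p m
      have h2 := dist_triangle x p m
      have h3 := dist_triangle w p m
      have c1 : dist x p = dist p x := dist_comm x p
      have c2 : dist p m = dist m p := dist_comm p m
      have c3 : dist m p = dist p m := dist_comm m p
      -- dist w x - t = gp w x z
      have key : dist w x - t = gp w x z := by
        rw [hgpt]; unfold gp
        rw [dist_comm x z, dist_comm x w, dist_comm z w]; ring
      have h4 := dist_triangle w m p
      -- dist w m ≤ dist w p + dist p m ≤ (dist w x - dist p x) + δ ≤ dist w x - t + 2δ
      have h5 : dist p x ≥ t - δ := by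
        rw [← hxm] at *; linarith
      linarith [dist_triangle w p m]
    · have h1 := segment_dist_add hszw hp
      have h2 := dist_triangle z p m
      have key : dist z w - (dist x z - t) = gp w x z := by
        rw [hgpt]; unfold gp
        rw [dist_comm x z, dist_comm x w, dist_comm z w]; ring
      have cpm : dist p m = dist m p := dist_comm p m
      have czm : dist z m = dist m z := dist_comm z m
      have c1 : dist p z = dist z p := dist_comm p z
      have h5 : dist p z ≥ (dist x z - t) - δ := by linarith
      have cwp : dist w p = dist p w := dist_comm w p
      linarith [dist_triangle w p m]
  obtain ⟨sxy, hsxy⟩ := hG x y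
  obtain ⟨syz, hsyz⟩ := hG y z
  have T2 := hH x y z sxy syz sxz hsxy hsyz hsxz.symm
  obtain ⟨q, hq, hmq⟩ := T2.2.2 m hm
  have hwq : dist w q ≤ gp w x z + 3 * δ := by
    have := dist_triangle w m q
    linarith
  rcases hq with hq | hq
  · have := gp_le_of_mem_segment hsxy hq w
    have hmin : min (gp w x y) (gp w y z) ≤ gp w x y := min_le_left _ _
    linarith
  · have := gp_le_of_mem_segment hsyz hq w
    have hmin : min (gp w x y) (gp w y z) ≤ gp w y z := min_le_right _ _
    linarith

end FourPtSec

section Orbit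
variable {X : Type*} [MetricSpace X]

lemma isom_dist_inv (g : X ≃ᵢ X) (x : X) : dist x (g⁻¹ x) = dist x (g x) := by
  have h1 : dist (g x) (g (g⁻¹ x)) = dist x (g⁻¹ x) := g.dist_eq _ _
  have h2 : g (g⁻¹ x) = x := by
    have h3 : (g * g⁻¹) x = x := by rw [mul_inv_cancel]; rfl
    exact h3
  rw [h2] at h1
  rw [← h1, dist_comm]

lemma isom_dist_apply_inv (g : X ≃ᵢ X) (x y : X) : dist x (g y) = dist (g⁻¹ x) y := by
  have h1 : dist (g⁻¹ x) (g⁻¹ (g y)) = dist x (g y) := g⁻¹.dist_eq _ _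
  have h2 : g⁻¹ (g y) = y := by
    have h3 : (g⁻¹ * g) y = y := by rw [inv_mul_cancel]; rfl
    exact h3
  rw [h2] at h1
  exact h1.symm

lemma dist_orbit_step (g : X ≃ᵢ X) (x : X) (i : ℕ) :
    dist ((g ^ i) x) ((g ^ (i + 1)) x) = dist x (g x) := by
  have h : (g ^ (i+1)) x = (g ^ i) (g x) := by rw [pow_succ]; rfl
  rw [h, (g ^ i).dist_eq]

lemma dist_pow_le (g : X ≃ᵢ X) (x : X) (n : ℕ) :
    dist x ((g ^ n) x) ≤ n * dist x (g x) := by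
  induction n with
  | zero => simp
  | succ n ih =>
      have := dist_triangle x ((g ^ n) x) ((g ^ (n+1)) x)
      rw [dist_orbit_step g x n] at this
      push_cast
      linarith

lemma gp_orbit (g : X ≃ᵢ X) (x : X) (i : ℕ) :
    gp ((g ^ (i+1)) x) ((g ^ i) x) ((g ^ (i+2)) x) = gp x (g⁻¹ x) (g x) := by
  have h1 : (g ^ (i+1)) (g⁻¹ x) = (g ^ i) x := by
    have h : g ^ (i+1) * g⁻¹ = g ^ i := by group
    rw [← h]; rfl
  have h2 : (g ^ (i+1)) (g x) = (g ^ (i+2)) x := by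
    have h : g ^ (i+1) * g = g ^ (i+2) := by group
    rw [← h]; rfl
  rw [← gp_isom (g ^ (i+1)) x (g⁻¹ x) (g x), h1, h2]

lemma chain_lemma {d4 : ℝ} (h4 : FourPt X d4) (hd4 : 0 ≤ d4) (g : X ≃ᵢ X) (x : X) :
    ∀ n : ℕ, (n : ℝ) * (dist x (g x) - 2 * gp x (g x) (g⁻¹ x) - 2 * d4)
      ≤ dist x ((g ^ n) x) := by
  set d := dist x (g x) with hd
  set P := gp x (g x) (g⁻¹ x) with hP
  have hP0 : 0 ≤ P := gp_nonneg _ _ _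
  by_cases hc : d - 2 * P - 2 * d4 ≤ 0
  · intro n
    have : (n:ℝ) * (d - 2*P - 2*d4) ≤ 0 :=
      mul_nonpos_of_nonneg_of_nonpos (Nat.cast_nonneg n) hc
    exact this.trans dist_nonneg
  push_neg at hc
  have Q : ∀ i : ℕ, 1 ≤ i → gp ((g ^ i) x) x ((g ^ (i+1)) x) ≤ P + d4 := by
    intro i hi
    induction i with
    | zero => omega
    | succ i ih =>
        rcases Nat.eq_zero_or_pos i with hi0 | hi0
        · subst hi0
          have horb : gp ((g ^ (0+1)) x) x ((g ^ (0+1+1)) x) = gp x (g⁻¹ x) (g x) := by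
            have h := gp_orbit g x 0
            have h0 : ((g ^ 0) x) = x := rfl
            rw [h0] at h
            exact h
          rw [horb, gp_symm]
          linarith
        · have hi' : 1 ≤ i := hi0
          have IH := ih hi'
          by_contra hQ
          push_neg at hQ
          have hdist : dist ((g ^ (i+1)) x) ((g ^ i) x) = d := by
            rw [dist_comm, dist_orbit_step]
          have hadd := gp_add x ((g ^ (i+1)) x) ((g ^ i) x)
          rw [hdist] at hadd
          have hA : d - (P + d4) ≤ gp ((g ^ (i+1)) x) x ((g ^ i) x) := by linarith
          have horb : gp ((g ^ (i+1)) x) ((g ^ (i+1+1)) x) ((g ^ i) x) = P := by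
            rw [gp_symm]
            have h := gp_orbit g x i
            rw [show i + 2 = i + 1 + 1 from rfl] at h
            rw [h, gp_symm]
          have h4' := h4 ((g ^ (i+1)) x) ((g ^ (i+1+1)) x) x ((g ^ i) x)
          rw [horb] at h4'
          have e1 : gp ((g ^ (i+1)) x) ((g ^ (i+1+1)) x) x
              = gp ((g ^ (i+1)) x) x ((g ^ (i+1+1)) x) := gp_symm _ _ _
          rw [e1] at h4'
          have m1 : P + d4 < min (gp ((g ^ (i+1)) x) x ((g ^ (i+1+1)) x))
              (gp ((g ^ (i+1)) x) x ((g ^ i) x)) := lt_min hQ (by linarith)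
          linarith
  intro n
  induction n with
  | zero => simp
  | succ n ih =>
      rcases Nat.eq_zero_or_pos n with h0 | h0
      · subst h0
        push_cast
        have h1 : (g ^ (0+1)) x = g x := by
          rw [show (0:ℕ)+1 = 1 from rfl, pow_one]
        rw [h1]
        linarith
      · have hQ := Q n h0
        have hexp := gp_dist ((g ^ n) x) x ((g ^ (n+1)) x)
        have hstep : dist ((g ^ n) x) ((g ^ (n+1)) x) = d := dist_orbit_step g x n
        have hcomm : dist ((g ^ n) x) x = dist x ((g ^ n) x) := dist_comm _ _
        push_cast
        linarith

end Orbit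

section Asymp
variable {X : Type*} [MetricSpace X]

lemma limsup_le_of_ev (u : ℕ → ℝ) {c C : ℝ} (h1 : ∀ n, c ≤ u n)
    (h2 : ∀ᶠ n in Filter.atTop, u n ≤ C) : Filter.limsup u Filter.atTop ≤ C := by
  have hb : Filter.IsBoundedUnder (· ≥ ·) Filter.atTop u :=
    ⟨c, Filter.eventually_map.2 (Filter.Eventually.of_forall h1)⟩
  exact Filter.limsup_le_of_le hb.isCoboundedUnder_le h2

lemma le_limsup_of_ev (u : ℕ → ℝ) {c C : ℝ} (h1 : ∀ᶠ n in Filter.atTop, c ≤ u n)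
    (h2 : ∀ᶠ n in Filter.atTop, u n ≤ C) : c ≤ Filter.limsup u Filter.atTop := by
  have hb : Filter.IsBoundedUnder (· ≤ ·) Filter.atTop u :=
    ⟨C, Filter.eventually_map.2 h2⟩
  exact Filter.le_limsup_of_frequently_le h1.frequently hb

lemma jointDispAt_singleton (h : X ≃ᵢ X) (z : X) : jointDispAt {h} z = dist z (h z) := by
  unfold jointDispAt
  rw [Set.image_singleton, csSup_singleton]

lemma jointDispAt_pair (a b : X ≃ᵢ X) (z : X) :
    jointDispAt {a, b} z = max (dist z (a z)) (dist z (b z)) := by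
  unfold jointDispAt
  rw [Set.image_pair, csSup_pair]

lemma jointMinDisp_singleton_le (h : X ≃ᵢ X) (z : X) :
    jointMinDisp {h} ≤ dist z (h z) := by
  unfold jointMinDisp
  rw [← jointDispAt_singleton h z]
  exact csInf_le ⟨0, by rintro _ ⟨w, rfl⟩; rw [jointDispAt_singleton]; exact dist_nonneg⟩
    (Set.mem_range_self z)

lemma le_jointMinDisp_singleton [Nonempty X] (h : X ≃ᵢ X) {c : ℝ}
    (hc : ∀ z, c ≤ dist z (h z)) : c ≤ jointMinDisp {h} := by
  unfold jointMinDisp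
  apply le_csInf (Set.range_nonempty _)
  rintro _ ⟨z, rfl⟩
  rw [jointDispAt_singleton]
  exact hc z

lemma jointMinDisp_singleton_nonneg (h : X ≃ᵢ X) : 0 ≤ jointMinDisp {h} := by
  unfold jointMinDisp
  apply Real.sInf_nonneg
  rintro _ ⟨z, rfl⟩
  rw [jointDispAt_singleton]
  exact dist_nonneg

/-- lower bound on displacement of all powers at all points, from chain lemma at one point -/
lemma dist_pow_ge_everywhere {d4 : ℝ} (h4 : FourPt X d4) (hd4 : 0 ≤ d4) (g : X ≃ᵢ X)
    (x : X) (z : X) (n : ℕ) :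
    (n : ℝ) * (dist x (g x) - 2 * gp x (g x) (g⁻¹ x) - 2 * d4) ≤ dist z ((g ^ n) z) := by
  set c := dist x (g x) - 2 * gp x (g x) (g⁻¹ x) - 2 * d4 with hc
  by_contra hlt
  push_neg at hlt
  set D := dist x z with hD
  have key : ∀ k : ℕ, ((n : ℝ) * k) * c ≤ k * dist z ((g ^ n) z) + 2 * D := by
    intro k
    have h1 := chain_lemma h4 hd4 g x (n * k)
    have h2 : dist x ((g ^ (n*k)) x) ≤ dist z ((g ^ (n*k)) z) + 2 * D := by
      have t1 := dist_triangle x z ((g ^ (n*k)) x)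
      have t2 := dist_triangle z ((g ^ (n*k)) z) ((g ^ (n*k)) x)
      have t3 : dist ((g ^ (n*k)) z) ((g ^ (n*k)) x) = dist z x := (g ^ (n*k)).dist_eq z x
      have t4 : dist z x = dist x z := dist_comm z x
      linarith
    have h3 : dist z ((g ^ (n*k)) z) ≤ k * dist z ((g ^ n) z) := by
      have e : g ^ (n * k) = (g ^ n) ^ k := pow_mul g n k
      rw [e]
      exact dist_pow_le (g ^ n) z k
    push_cast at h1 ⊢
    rw [← hc] at h1
    linarith
  set ε := (n : ℝ) * c - dist z ((g ^ n) z) with hε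
  have hε0 : 0 < ε := by simp [hε]; linarith
  obtain ⟨k, hk⟩ := exists_nat_gt (2 * D / ε)
  have hk0 : 0 < (k:ℝ) := lt_of_le_of_lt (div_nonneg (by positivity) hε0.le) hk
  have := key k
  have h5 : (k : ℝ) * ε ≤ 2 * D := by
    have : (n : ℝ) * k * c - k * dist z ((g ^ n) z) ≤ 2 * D := by linarith
    calc (k:ℝ) * ε = (n : ℝ) * k * c - k * dist z ((g ^ n) z) := by rw [hε]; ring
    _ ≤ 2 * D := this
  have h6 : 2 * D / ε < (k : ℝ) := hk
  rw [div_lt_iff₀ hε0] at h6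
  nlinarith

lemma le_asympDisp [Nonempty X] (g : X ≃ᵢ X) {c C : ℝ}
    (h : ∀ z (n : ℕ), 1 ≤ n → (n : ℝ) * c ≤ dist z ((g ^ n) z))
    (hC : ∀ n : ℕ, 1 ≤ n → ∃ w, dist w ((g ^ n) w) ≤ (n : ℝ) * C) :
    c ≤ asympDisp {g} := by
  unfold asympDisp
  apply le_limsup_of_ev
  · rw [Filter.eventually_atTop]
    refine ⟨1, fun n hn => ?_⟩
    rw [Set.singleton_pow]
    have hn' : (0:ℝ) < n := by exact_mod_cast hn
    rw [le_div_iff₀ hn']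
    have := le_jointMinDisp_singleton (g ^ n) (c := (n:ℝ) * c) (fun z => h z n hn)
    linarith
  · rw [Filter.eventually_atTop]
    refine ⟨1, fun n hn => ?_⟩
    rw [Set.singleton_pow]
    have hn' : (0:ℝ) < n := by exact_mod_cast hn
    rw [div_le_iff₀ hn']
    obtain ⟨w, hw⟩ := hC n hn
    have := jointMinDisp_singleton_le (g ^ n) w
    linarith [mul_comm (C : ℝ) (n : ℝ)]

lemma asympDisp_le (g : X ≃ᵢ X) {C : ℝ}
    (hC : ∀ n : ℕ, 1 ≤ n → ∃ w, dist w ((g ^ n) w) ≤ (n : ℝ) * C) :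
    asympDisp {g} ≤ C := by
  unfold asympDisp
  apply limsup_le_of_ev
  · intro n
    rw [Set.singleton_pow]
    exact div_nonneg (jointMinDisp_singleton_nonneg _) (Nat.cast_nonneg n)
  · rw [Filter.eventually_atTop]
    refine ⟨1, fun n hn => ?_⟩
    rw [Set.singleton_pow]
    have hn' : (0:ℝ) < n := by exact_mod_cast hn
    rw [div_le_iff₀ hn']
    obtain ⟨w, hw⟩ := hC n hn
    have := jointMinDisp_singleton_le (g ^ n) w
    linarith [mul_comm (C:ℝ) (n:ℝ)]

lemma asympDisp_nonneg [Nonempty X] (g : X ≃ᵢ X) : 0 ≤ asympDisp {g} := by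
  have x0 := Classical.arbitrary X
  apply le_asympDisp g (c := 0) (C := dist x0 (g x0))
  · intro z n _
    simpa using dist_nonneg (x := z) (y := ((g^n) z))
  · intro n hn
    exact ⟨x0, dist_pow_le g x0 n⟩

/-- main lower bound for asymptotic translation length -/
lemma asympDisp_ge_of_chain [Nonempty X] {d4 : ℝ} (h4 : FourPt X d4) (hd4 : 0 ≤ d4)
    (g : X ≃ᵢ X) (x : X) :
    dist x (g x) - 2 * gp x (g x) (g⁻¹ x) - 2 * d4 ≤ asympDisp {g} := by
  apply le_asympDisp g
  · intro z n _
    exact dist_pow_ge_everywhere h4 hd4 g x z n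
  · intro n hn
    exact ⟨x, dist_pow_le g x n⟩

lemma conj_pow_eq (e g : X ≃ᵢ X) (n : ℕ) : (e⁻¹ * g * e) ^ n = e⁻¹ * g ^ n * e := by
  induction n with
  | zero => simp
  | succ n ih =>
      rw [pow_succ, pow_succ, ih]
      group

lemma jointMinDisp_conj (e g : X ≃ᵢ X) : jointMinDisp {e⁻¹ * g * e} = jointMinDisp {g} := by
  unfold jointMinDisp
  have h1 : Set.range (jointDispAt {e⁻¹ * g * e}) = Set.range (jointDispAt {g}) := by
    have h2 : jointDispAt {e⁻¹ * g * e} = (jointDispAt {g}) ∘ e := by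
      funext z
      simp only [Function.comp_apply, jointDispAt_singleton]
      have he : (e⁻¹ * g * e) z = e⁻¹ (g (e z)) := rfl
      rw [he, isom_dist_apply_inv e⁻¹ z (g (e z)), inv_inv]
    rw [h2, Set.range_comp, e.surjective.range_eq, Set.image_univ]
  rw [h1]

lemma asympDisp_conj (e g : X ≃ᵢ X) : asympDisp {e⁻¹ * g * e} = asympDisp {g} := by
  unfold asympDisp
  congr 1
  funext n
  rw [Set.singleton_pow, Set.singleton_pow, conj_pow_eq, jointMinDisp_conj]

lemma asympDisp_mul_comm (a b : X ≃ᵢ X) : asympDisp {b * a} = asympDisp {a * b} := by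
  have h : b * a = a⁻¹ * (a * b) * a := by group
  rw [h, asympDisp_conj]

end Asymp

section Move
variable {X : Type*} [MetricSpace X]

/-- Moving from `x` distance `s` towards `w` decreases the displacement of `b`
provided `w` makes large Gromov products with `b x` and `b⁻¹ x`. -/
lemma move_lemma {d4 : ℝ} (h4 : FourPt X d4) (hd4 : 0 ≤ d4) (b : X ≃ᵢ X)
    (x y w : X) (s : ℝ)
    (hxy : dist x y = s) (hyw : dist x w = dist x y + dist y w)
    (h1 : s ≤ gp x w (b x)) (h2 : s ≤ gp x w (b⁻¹ x)) (h3 : 2 * s ≤ dist x (b x)) :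
    dist y (b y) ≤ dist x (b x) - s + 6 * d4 := by
  set B := dist x (b x) with hB
  have hBinv : dist x (b⁻¹ x) = B := isom_dist_inv b x
  have hgxyw : gp x y w = s := by
    unfold gp; rw [hxy] at hyw ⊢; linarith
  -- dist y (b x) ≤ B - s + 2 d4
  have k1 : gp x y (b x) ≥ s - d4 := by
    have := h4 x y w (b x)
    rw [hgxyw] at this
    have hm : min s (gp x w (b x)) = s := min_eq_left h1
    rw [hm] at this
    linarith
  have d1 : dist y (b x) ≤ B - s + 2 * d4 := by
    have := gp_dist x y (b x)
    rw [hxy] at this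
    linarith
  -- dist x (b y) ≤ B - s + 2 d4
  have k2 : gp x y (b⁻¹ x) ≥ s - d4 := by
    have := h4 x y w (b⁻¹ x)
    rw [hgxyw] at this
    have hm : min s (gp x w (b⁻¹ x)) = s := min_eq_left h2
    rw [hm] at this
    linarith
  have d2' : dist y (b⁻¹ x) ≤ B - s + 2 * d4 := by
    have := gp_dist x y (b⁻¹ x)
    rw [hxy, hBinv] at this
    linarith
  have d2 : dist x (b y) ≤ B - s + 2 * d4 := by
    have he : dist x (b y) = dist (b⁻¹ x) y := isom_dist_apply_inv b x y
    rw [he, dist_comm]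
    exact d2'
  -- Gromov products at b x
  have dbxby : dist (b x) (b y) = s := by rw [b.dist_eq, hxy]
  have k3 : gp (b x) x (b y) ≥ s - d4 := by
    unfold gp
    rw [dbxby, dist_comm (b x) x]
    linarith
  have hlow : dist (b x) y ≥ B - s := by
    have := dist_triangle x y (b x)
    have c : dist y (b x) = dist (b x) y := dist_comm y (b x)
    rw [hxy] at this
    linarith
  have hs0 : 0 ≤ s := hxy ▸ dist_nonneg
  have k4 : gp (b x) y x ≥ B - s := by
    unfold gp
    rw [dist_comm (b x) x, dist_comm y x, hxy]
    linarith
  have k5 : gp (b x) y (b y) ≥ s - 2 * d4 := by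
    have := h4 (b x) y x (b y)
    have hm : min (gp (b x) y x) (gp (b x) x (b y)) ≥ s - d4 :=
      le_min (by linarith) k3
    linarith
  have final := gp_dist (b x) y (b y)
  rw [dbxby] at final
  have c : dist (b x) y = dist y (b x) := dist_comm _ _
  linarith

end Move

section Key
variable {X : Type*} [MetricSpace X]

lemma key_aux {d4 : ℝ} (h4 : FourPt X d4) (hd4 : 0 ≤ d4) (hG : GeodesicSpace X)
    [Nonempty X] (a b : X ≃ᵢ X) (x : X) {ε : ℝ} (hε : 0 < ε)
    (hL : ∀ y : X, jointMinDisp {a, b} ≤ max (dist y (a y)) (dist y (b y)))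
    (hx : max (dist x (a x)) (dist x (b x)) ≤ jointMinDisp {a, b} + ε)
    (hBA : dist x (b x) ≤ dist x (a x)) :
    jointMinDisp {a, b} ≤ max (max (asympDisp {a}) (asympDisp {b})) (asympDisp {a * b} / 2)
      + 40 * d4 + 40 * ε := by
  set L := jointMinDisp {a, b} with hLdef
  set A := dist x (a x) with hA
  set B := dist x (b x) with hB
  set M := max (max (asympDisp {a}) (asympDisp {b})) (asympDisp {a * b} / 2) with hM
  have hM0 : 0 ≤ M :=
    le_trans (asympDisp_nonneg a) (le_trans (le_max_left _ _) (le_max_left _ _))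
  have hMa : asympDisp {a} ≤ M := le_trans (le_max_left _ _) (le_max_left _ _)
  have hMb : asympDisp {b} ≤ M := le_trans (le_max_right _ _) (le_max_left _ _)
  have hMab : asympDisp {a * b} ≤ 2 * M := by
    have := le_max_right (max (asympDisp {a}) (asympDisp {b})) (asympDisp {a * b} / 2)
    rw [← hM] at this
    linarith
  have hLA : L ≤ A := le_trans (hL x) (le_of_eq (max_eq_left hBA))
  have hAL : A ≤ L + ε := le_trans (le_max_left _ _) hx
  have hBL : B ≤ L + ε := le_trans (le_max_right _ _) hx
  set Pa := gp x (a x) (a⁻¹ x) with hPadef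
  set Pb := gp x (b x) (b⁻¹ x) with hPbdef
  have ellA : A - 2 * Pa - 2 * d4 ≤ asympDisp {a} := asympDisp_ge_of_chain h4 hd4 a x
  have ellB : B - 2 * Pb - 2 * d4 ≤ asympDisp {b} := asympDisp_ge_of_chain h4 hd4 b x
  set s := 7 * d4 + 2 * ε with hs
  have hs0 : 0 < s := by positivity
  by_cases hAbig : A ≤ 40 * d4 + 40 * ε
  · linarith
  push_neg at hAbig
  have h2sA : 2 * s ≤ A := by simp only [hs]; linarith
  by_cases hPa : Pa < s + d4
  · linarith
  push_neg at hPa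
  -- B is also nearly maximal
  have hBlow : L - 2 * s ≤ B := by
    by_contra hB'
    push_neg at hB'
    have hsw : s ≤ dist x (a x) := by linarith
    obtain ⟨y, hxy, hyw'⟩ := geodesic_point hG x (a x) ⟨hs0.le, hsw⟩
    have hyw : dist x (a x) = dist x y + dist y (a x) := by rw [hxy, hyw']; ring
    have ca1 : s ≤ gp x (a x) (a x) := by rw [gp_self]; linarith
    have ca2 : s ≤ gp x (a x) (a⁻¹ x) := by rw [← hPadef]; linarith
    have da := move_lemma h4 hd4 a x y (a x) s hxy hyw ca1 ca2 h2sA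
    have db : dist y (b y) ≤ B + 2 * s := by
      have t1 := dist_triangle y x (b y)
      have t2 := dist_triangle x (b x) (b y)
      have t3 : dist (b x) (b y) = dist x y := b.dist_eq x y
      have t4 : dist y x = dist x y := dist_comm y x
      rw [hxy] at t3 t4
      linarith
    have hy := hL y
    have hmax : max (dist y (a y)) (dist y (b y)) < L := by
      apply max_lt <;> linarith
    linarith
  by_cases hPb : Pb < s + d4
  · linarith
  push_neg at hPb
  have h2sB : 2 * s ≤ B := by linarith
  set g1 := gp x (a x) (b x) with hg1
  set g2 := gp x (a x) (b⁻¹ x) with hg2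
  set g3 := gp x (a⁻¹ x) (b x) with hg3
  set g4 := gp x (a⁻¹ x) (b⁻¹ x) with hg4
  have hAinv : dist x (a⁻¹ x) = A := isom_dist_inv a x
  have hBinv : dist x (b⁻¹ x) = B := isom_dist_inv b x
  -- the four direction-failure facts
  have F1 : ¬ (s ≤ g1 ∧ s ≤ g2) := by
    rintro ⟨c1, c2⟩
    have hsw : s ≤ dist x (a x) := by linarith
    obtain ⟨y, hxy, hyw'⟩ := geodesic_point hG x (a x) ⟨hs0.le, hsw⟩
    have hyw : dist x (a x) = dist x y + dist y (a x) := by rw [hxy, hyw']; ring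
    have ca1 : s ≤ gp x (a x) (a x) := by rw [gp_self]; linarith
    have ca2 : s ≤ gp x (a x) (a⁻¹ x) := by rw [← hPadef]; linarith
    have da := move_lemma h4 hd4 a x y (a x) s hxy hyw ca1 ca2 h2sA
    have db := move_lemma h4 hd4 b x y (a x) s hxy hyw c1 c2 h2sB
    have hy := hL y
    have hmax : max (dist y (a y)) (dist y (b y)) < L := by
      apply max_lt <;> linarith
    linarith
  have F2 : ¬ (s ≤ g3 ∧ s ≤ g4) := by
    rintro ⟨c1, c2⟩
    have hsw : s ≤ dist x (a⁻¹ x) := by rw [hAinv]; linarith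
    obtain ⟨y, hxy, hyw'⟩ := geodesic_point hG x (a⁻¹ x) ⟨hs0.le, hsw⟩
    have hyw : dist x (a⁻¹ x) = dist x y + dist y (a⁻¹ x) := by rw [hxy, hyw']; ring
    have ca1 : s ≤ gp x (a⁻¹ x) (a x) := by rw [gp_symm, ← hPadef]; linarith
    have ca2 : s ≤ gp x (a⁻¹ x) (a⁻¹ x) := by rw [gp_self, hAinv]; linarith
    have da := move_lemma h4 hd4 a x y (a⁻¹ x) s hxy hyw ca1 ca2 h2sA
    have db := move_lemma h4 hd4 b x y (a⁻¹ x) s hxy hyw c1 c2 h2sB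
    have hy := hL y
    have hmax : max (dist y (a y)) (dist y (b y)) < L := by
      apply max_lt <;> linarith
    linarith
  have F3 : ¬ (s ≤ g1 ∧ s ≤ g3) := by
    rintro ⟨c1, c2⟩
    have hsw : s ≤ dist x (b x) := by linarith
    obtain ⟨y, hxy, hyw'⟩ := geodesic_point hG x (b x) ⟨hs0.le, hsw⟩
    have hyw : dist x (b x) = dist x y + dist y (b x) := by rw [hxy, hyw']; ring
    have cb1 : s ≤ gp x (b x) (b x) := by rw [gp_self]; linarith
    have cb2 : s ≤ gp x (b x) (b⁻¹ x) := by rw [← hPbdef]; linarith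
    have ca1 : s ≤ gp x (b x) (a x) := by rw [← gp_symm, ← hg1]; exact c1
    have ca2 : s ≤ gp x (b x) (a⁻¹ x) := by rw [← gp_symm, ← hg3]; exact c2
    have da := move_lemma h4 hd4 a x y (b x) s hxy hyw ca1 ca2 h2sA
    have db := move_lemma h4 hd4 b x y (b x) s hxy hyw cb1 cb2 h2sB
    have hy := hL y
    have hmax : max (dist y (a y)) (dist y (b y)) < L := by
      apply max_lt <;> linarith
    linarith
  have F4 : ¬ (s ≤ g2 ∧ s ≤ g4) := by
    rintro ⟨c1, c2⟩
    have hsw : s ≤ dist x (b⁻¹ x) := by rw [hBinv]; linarith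
    obtain ⟨y, hxy, hyw'⟩ := geodesic_point hG x (b⁻¹ x) ⟨hs0.le, hsw⟩
    have hyw : dist x (b⁻¹ x) = dist x y + dist y (b⁻¹ x) := by rw [hxy, hyw']; ring
    have cb1 : s ≤ gp x (b⁻¹ x) (b x) := by rw [gp_symm, ← hPbdef]; linarith
    have cb2 : s ≤ gp x (b⁻¹ x) (b⁻¹ x) := by rw [gp_self, hBinv]; linarith
    have ca1 : s ≤ gp x (b⁻¹ x) (a x) := by rw [← gp_symm, ← hg2]; exact c1
    have ca2 : s ≤ gp x (b⁻¹ x) (a⁻¹ x) := by rw [← gp_symm, ← hg4]; exact c2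
    have da := move_lemma h4 hd4 a x y (b⁻¹ x) s hxy hyw ca1 ca2 h2sA
    have db := move_lemma h4 hd4 b x y (b⁻¹ x) s hxy hyw cb1 cb2 h2sB
    have hy := hL y
    have hmax : max (dist y (a y)) (dist y (b y)) < L := by
      apply max_lt <;> linarith
    linarith
  -- all four Gromov products are < s + d4
  set s' := s + d4 with hs'
  have E1 : g1 < s' := by
    by_contra hE
    push_neg at hE
    have h := h4 x (a⁻¹ x) (a x) (b x)
    have e1 : gp x (a⁻¹ x) (a x) = Pa := gp_symm _ _ _
    rw [e1, ← hg1, ← hg3] at h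
    have hmin : s' ≤ min Pa g1 := le_min (by linarith) hE
    exact F3 ⟨by linarith, by linarith⟩
  have E2 : g2 < s' := by
    by_contra hE
    push_neg at hE
    have h := h4 x (a x) (b⁻¹ x) (b x)
    have e1 : gp x (b⁻¹ x) (b x) = Pb := gp_symm _ _ _
    rw [e1, ← hg1, ← hg2] at h
    have hmin : s' ≤ min g2 Pb := le_min hE (by linarith)
    exact F1 ⟨by linarith, by linarith⟩
  have E3 : g3 < s' := by
    by_contra hE
    push_neg at hE
    have h := h4 x (a⁻¹ x) (b x) (b⁻¹ x)
    rw [← hPbdef, ← hg3, ← hg4] at h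
    have hmin : s' ≤ min g3 Pb := le_min hE (by linarith)
    exact F2 ⟨by linarith, by linarith⟩
  have E4 : g4 < s' := by
    by_contra hE
    push_neg at hE
    have h := h4 x (a x) (a⁻¹ x) (b⁻¹ x)
    rw [← hPadef, ← hg2, ← hg4] at h
    have hmin : s' ≤ min Pa g4 := le_min (by linarith) hE
    exact F4 ⟨by linarith, by linarith⟩
  -- final computation with a*b
  set D := dist x ((a * b) x) with hD
  have hab1 : (a * b) x = a (b x) := rfl
  have habD : D = A + B - 2 * g3 := by
    have e1 : dist x ((a * b) x) = dist (a⁻¹ x) (b x) := by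
      rw [hab1]; exact isom_dist_apply_inv a x (b x)
    have e2 := gp_dist x (a⁻¹ x) (b x)
    rw [← hg3, hAinv, ← hB] at e2
    rw [hD, e1, e2]
  have habinv : (a * b)⁻¹ x = b⁻¹ (a⁻¹ x) := by
    rw [mul_inv_rev]; rfl
  have hDinv : dist x ((a * b)⁻¹ x) = D := by rw [hD]; exact isom_dist_inv (a * b) x
  -- r := gp x ((a*b)⁻¹ x) (b⁻¹ x)
  have hr : 2 * gp x ((a * b)⁻¹ x) (b⁻¹ x) = D + B - A := by
    have e2 := gp_dist x ((a * b)⁻¹ x) (b⁻¹ x)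
    have e3 : dist ((a * b)⁻¹ x) (b⁻¹ x) = A := by
      rw [habinv]
      have : dist (b⁻¹ (a⁻¹ x)) (b⁻¹ x) = dist (a⁻¹ x) x := b⁻¹.dist_eq _ _
      rw [this, dist_comm, hAinv]
    rw [e3, hDinv, hBinv] at e2
    linarith
  -- step 1 : q1 := gp x (a x) ((a*b)⁻¹ x) < s' + d4
  have step1 : gp x (a x) ((a * b)⁻¹ x) < s' + d4 := by
    by_contra hq
    push_neg at hq
    have h := h4 x (a x) ((a * b)⁻¹ x) (b⁻¹ x)
    rw [← hg2] at h
    have hrge : s' + d4 ≤ gp x ((a * b)⁻¹ x) (b⁻¹ x) := by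
      have e1 : s = 7 * d4 + 2 * ε := hs
      have e2 : s' = s + d4 := hs'
      linarith
    have hmin : s' + d4 ≤ min (gp x (a x) ((a * b)⁻¹ x)) (gp x ((a * b)⁻¹ x) (b⁻¹ x)) :=
      le_min hq hrge
    linarith
  -- step 2 : Pab < s' + 2 d4
  have step2 : gp x ((a * b) x) ((a * b)⁻¹ x) < s' + 2 * d4 := by
    by_contra hq
    push_neg at hq
    have h := h4 x (a x) ((a * b) x) ((a * b)⁻¹ x)
    have ht : 2 * gp x (a x) ((a * b) x) = A + D - B := by
      have e2 := gp_dist x (a x) ((a * b) x)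
      have e3 : dist (a x) ((a * b) x) = B := by
        rw [hab1, a.dist_eq, ← hB]
      rw [e3, ← hA, ← hD] at e2
      linarith
    have htge : s' + 2 * d4 ≤ gp x (a x) ((a * b) x) := by
      have e1 : s = 7 * d4 + 2 * ε := hs
      have e2 : s' = s + d4 := hs'
      linarith
    have hmin : s' + 2 * d4 ≤ min (gp x (a x) ((a * b) x)) (gp x ((a * b) x) ((a * b)⁻¹ x)) :=
      le_min htge hq
    linarith
  have ellAB : D - 2 * gp x ((a * b) x) ((a * b)⁻¹ x) - 2 * d4 ≤ asympDisp {a * b} :=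
    asympDisp_ge_of_chain h4 hd4 (a * b) x
  have e1 : s = 7 * d4 + 2 * ε := hs
  have e2 : s' = s + d4 := hs'
  linarith

end Key

section Final
variable {X : Type*} [MetricSpace X]

lemma jointMinDisp_empty [IsEmpty X] (S : Set (X ≃ᵢ X)) : jointMinDisp S = 0 := by
  unfold jointMinDisp
  rw [Set.range_eq_empty]
  exact Real.sInf_empty

lemma asympDisp_empty [IsEmpty X] (S : Set (X ≃ᵢ X)) : asympDisp S = 0 := by
  unfold asympDisp
  have h : (fun n : ℕ => jointMinDisp (S ^ n) / n) = fun _ : ℕ => (0:ℝ) := by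
    funext n
    rw [jointMinDisp_empty, zero_div]
  rw [h]
  exact Filter.limsup_const 0

lemma upper_bound [Nonempty X] (a b : X ≃ᵢ X) :
    max (max (asympDisp {a}) (asympDisp {b})) (asympDisp {a * b} / 2) ≤
      jointMinDisp {a, b} := by
  unfold jointMinDisp
  apply le_csInf (Set.range_nonempty _)
  rintro _ ⟨z, rfl⟩
  rw [jointDispAt_pair]
  set C := max (dist z (a z)) (dist z (b z)) with hC
  have hCa : dist z (a z) ≤ C := le_max_left _ _
  have hCb : dist z (b z) ≤ C := le_max_right _ _
  apply max_le (max_le ?_ ?_) ?_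
  · apply asympDisp_le a
    intro n hn
    refine ⟨z, le_trans (dist_pow_le a z n) ?_⟩
    exact mul_le_mul_of_nonneg_left hCa (Nat.cast_nonneg n)
  · apply asympDisp_le b
    intro n hn
    refine ⟨z, le_trans (dist_pow_le b z n) ?_⟩
    exact mul_le_mul_of_nonneg_left hCb (Nat.cast_nonneg n)
  · have h2 : asympDisp {a * b} ≤ 2 * C := by
      apply asympDisp_le (a * b)
      intro n hn
      refine ⟨z, le_trans (dist_pow_le (a * b) z n) ?_⟩
      have hd : dist z ((a * b) z) ≤ 2 * C := by
        have t1 := dist_triangle z (a z) (a (b z))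
        have t2 : dist (a z) (a (b z)) = dist z (b z) := a.dist_eq _ _
        have t3 : (a * b) z = a (b z) := rfl
        rw [t3]
        linarith
      exact mul_le_mul_of_nonneg_left hd (Nat.cast_nonneg n)
    linarith

end Final

/-- There is an absolute constant `K > 0` such that for every `δ ≥ 0`, every
geodesic `δ`-hyperbolic space `X` and any two isometries `a, b` of `X`,
`L({a,b}) − Kδ ≤ max{ℓ(a), ℓ(b), ℓ(ab)/2} ≤ L({a,b})`. -/
theorem exists_const_jointMinDisp_pair :
    ∃ K : ℝ, 0 < K ∧ ∀ (δ : ℝ), 0 ≤ δ → ∀ (X : Type u) [MetricSpace X],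
      GeodesicSpace X → GromovHyperbolic X δ → ∀ a b : X ≃ᵢ X,
        jointMinDisp {a, b} - K * δ ≤
          max (max (asympDisp {a}) (asympDisp {b})) (asympDisp {a * b} / 2) ∧
        max (max (asympDisp {a}) (asympDisp {b})) (asympDisp {a * b} / 2) ≤
          jointMinDisp {a, b} := by
  refine ⟨120, by norm_num, ?_⟩
  intro δ hδ X _ hGeo hHyp a b
  rcases isEmpty_or_nonempty X with hE | hN
  · rw [jointMinDisp_empty, asympDisp_empty, asympDisp_empty, asympDisp_empty]
    constructor
    · simp only [zero_div, max_self]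
      nlinarith
    · simp
  · constructor
    · have h4 := fourPt_of_hyperbolic hδ hGeo hHyp
      have hd4 : 0 ≤ 3 * δ := by linarith
      rw [sub_le_iff_le_add]
      have key : jointMinDisp {a, b} ≤
          max (max (asympDisp {a}) (asympDisp {b})) (asympDisp {a * b} / 2) + 120 * δ := by
        apply le_of_forall_pos_le_add
        intro ε hε
        have hε' : 0 < ε / 40 := by linarith
        have hbdd : BddBelow (Set.range (jointDispAt ({a, b} : Set (X ≃ᵢ X)))) := by
          refine ⟨0, ?_⟩
          rintro _ ⟨z, rfl⟩
          rw [jointDispAt_pair]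
          exact le_trans dist_nonneg (le_max_left _ _)
        have hL : ∀ y : X, jointMinDisp {a, b} ≤ max (dist y (a y)) (dist y (b y)) := by
          intro y
          have h := csInf_le hbdd (Set.mem_range_self y)
          rw [jointDispAt_pair] at h
          exact h
        have hlt : sInf (Set.range (jointDispAt ({a, b} : Set (X ≃ᵢ X)))) <
            jointMinDisp {a, b} + ε / 40 := by
          have : jointMinDisp {a, b} = sInf (Set.range (jointDispAt ({a, b} : Set (X ≃ᵢ X)))) := rfl
          linarith
        obtain ⟨_, ⟨x, rfl⟩, hx⟩ := exists_lt_of_csInf_lt (Set.range_nonempty _) hlt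
        have hx' : max (dist x (a x)) (dist x (b x)) ≤ jointMinDisp {a, b} + ε / 40 := by
          rw [← jointDispAt_pair a b x]
          exact hx.le
        rcases le_total (dist x (b x)) (dist x (a x)) with hBA | hAB
        · have hk := key_aux h4 hd4 hGeo a b x hε' hL hx' hBA
          have : 40 * (3 * δ) + 40 * (ε / 40) = 120 * δ + ε := by ring
          linarith
        · have hpair : ({b, a} : Set (X ≃ᵢ X)) = {a, b} := Set.pair_comm b a
          have hL' : ∀ y : X, jointMinDisp {b, a} ≤ max (dist y (b y)) (dist y (a y)) := by
            intro y
            rw [hpair, max_comm]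
            exact hL y
          have hx'' : max (dist x (b x)) (dist x (a x)) ≤ jointMinDisp {b, a} + ε / 40 := by
            rw [hpair, max_comm]
            exact hx'
          have hk := key_aux h4 hd4 hGeo b a x hε' hL' hx'' hAB
          rw [hpair, max_comm (asympDisp {b}) (asympDisp {a}), asympDisp_mul_comm a b] at hk
          have : 40 * (3 * δ) + 40 * (ε / 40) = 120 * δ + ε := by ring
          linarith
      linarith
    · exact upper_bound a b
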